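/- (a) If a nonsingular finite poset P elementarily zips onto a poset P′, then P′ is nonsingular (hence zipping preserves nonsingularity). (b) If a nonsingular finite poset P admits a sequence of elementary zippings P = P_0 → P_1 → ⋯ → P_n with composite quotient map f : P → P_n, then the dual map f^op : P^op → (P_n)^op is a constructible map. -/

import Mathlib

universe u

/-- `a` is a maximal element of the subposet `A`. -/
def IsMaxIn {P : Type*} [PartialOrder P] (A : Set P) (a : P) : Prop :=
  a ∈ A ∧ ∀ x ∈ A, a ≤ x → x = a

/-- `b` covers `a` within the subposet `A`: `a < b` and no element of `A` lies
strictly between them. -/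
def CoversIn {P : Type*} [PartialOrder P] (A : Set P) (a b : P) : Prop :=
  a ∈ A ∧ b ∈ A ∧ a < b ∧ ∀ x ∈ A, a < x → ¬x < b

/-- The subposet `A` is of codimension one in the subposet `B`: every maximal element
of `A` is covered (within `B`) by a maximal element of `B`. -/
def CodimOneIn {P : Type*} [PartialOrder P] (A B : Set P) : Prop :=
  ∀ a : P, IsMaxIn A a → ∃ b : P, IsMaxIn B b ∧ CoversIn B a b

/-- The subposet `A` is of pure codimension one in the subposet `B`: it is of
codimension one, and no maximal element of `A` is covered by a non-maximal element
of `B`. -/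
def PureCodimOneIn {P : Type*} [PartialOrder P] (A B : Set P) : Prop :=
  CodimOneIn A B ∧ ∀ a : P, IsMaxIn A a → ∀ b : P, CoversIn B a b → IsMaxIn B b

/-- `A` is a closed subposet of the subposet `B`. -/
def IsClosedSubposet {P : Type*} [PartialOrder P] (B A : Set P) : Prop :=
  A ⊆ B ∧ ∀ a ∈ A, ∀ x ∈ B, x ≤ a → x ∈ A

/-- A (sub)poset is constructible if either it has a greatest element, or it is a union
`Q ∪ R` of closed subposets such that `Q ∩ R` is of codimension one both in `Q` and in
`R`, and each of `Q`, `R` and `Q ∩ R` is constructible. -/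
inductive PosetConstructible {P : Type*} [PartialOrder P] : Set P → Prop where
  | cone {A : Set P} {g : P} (hg : g ∈ A) (hgreatest : ∀ x ∈ A, x ≤ g) :
      PosetConstructible A
  | step {Q R : Set P} (hQ : IsClosedSubposet (Q ∪ R) Q) (hR : IsClosedSubposet (Q ∪ R) R)
      (hcQ : CodimOneIn (Q ∩ R) Q) (hcR : CodimOneIn (Q ∩ R) R)
      (cQ : PosetConstructible Q) (cR : PosetConstructible R)
      (cQR : PosetConstructible (Q ∩ R)) : PosetConstructible (Q ∪ R)

/-- A monotone map `f : P → Q` is a filtration map if `f⁻¹(⌊q⌋ \ {q})` is of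
codimension one in `f⁻¹(⌊q⌋)` for every `q`. -/
def IsFiltrationMap {P Q : Type*} [PartialOrder P] [PartialOrder Q] (f : P → Q) : Prop :=
  ∀ q : Q, CodimOneIn (f ⁻¹' {y | y < q}) (f ⁻¹' {y | y ≤ q})

/-- A monotone map `f : P → Q` is a pure filtration map if `f⁻¹(⌊q⌋ \ {q})` is of
pure codimension one in `f⁻¹(⌊q⌋)` for every `q`. -/
def IsPureFiltrationMap {P Q : Type*} [PartialOrder P] [PartialOrder Q] (f : P → Q) :
    Prop :=
  ∀ q : Q, PureCodimOneIn (f ⁻¹' {y | y < q}) (f ⁻¹' {y | y ≤ q})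

/-- A monotone map is constructible if it is a filtration map and every `f⁻¹(⌊q⌋)` is
constructible. -/
def IsConstructibleMap {P Q : Type*} [PartialOrder P] [PartialOrder Q] (f : P → Q) :
    Prop :=
  IsFiltrationMap f ∧ ∀ q : Q, PosetConstructible (f ⁻¹' {y | y ≤ q})

/-- A poset is nonsingular if it contains no interval of cardinality exactly three. -/
def NonsingularPoset (P : Type*) [PartialOrder P] : Prop :=
  ∀ a b : P, (Set.Icc a b).ncard ≠ 3

/-- `f : α → β` is the elementary zipping of `α` along `p`, where `p` covers the two
incomparable elements `q` and `r`: `f` is the surjective monotone quotient map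
identifying `p`, `q` and `r`, with the order on the quotient as described by
Reading's zipping. -/
def IsElementaryZipping {α β : Type u} [PartialOrder α] [PartialOrder β]
    (f : α → β) (p q r : α) : Prop :=
  ¬q ≤ r ∧ ¬r ≤ q ∧ q ⋖ p ∧ r ⋖ p ∧
  (∀ s : α, s < p → s ≠ q → s ≠ r → s < q ∧ s < r) ∧
  (∀ s : α, q < s → r < s → p ≤ s) ∧
  Monotone f ∧ Function.Surjective f ∧
  (∀ x y : α, f x = f y ↔ x = y ∨ (x ∈ ({p, q, r} : Set α) ∧ y ∈ ({p, q, r} : Set α))) ∧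
  (∀ x y : α, x ∉ ({p, q, r} : Set α) → y ∉ ({p, q, r} : Set α) → (f x ≤ f y ↔ x ≤ y)) ∧
  (∀ x : α, x ∉ ({p, q, r} : Set α) → (f x ≤ f p ↔ x ≤ p ∨ x ≤ q ∨ x ≤ r)) ∧
  (∀ y : α, y ∉ ({p, q, r} : Set α) → (f p ≤ f y ↔ p ≤ y ∨ q ≤ y ∨ r ≤ y))

/-- `ZipSeq α β f` holds when `f` is the composite of a finite sequence of elementary
zippings `α = P₀ → P₁ → ⋯ → Pₙ = β`. -/
inductive ZipSeq : ∀ (α : Type u) [PartialOrder α] (β : Type u) [PartialOrder β],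
    (α → β) → Prop where
  | refl (α : Type u) [PartialOrder α] : ZipSeq α α id
  | step {α β γ : Type u} [PartialOrder α] [PartialOrder β] [PartialOrder γ]
      {g : α → β} {h : β → γ} (p q r : β)
      (hg : ZipSeq α β g) (hh : IsElementaryZipping h p q r) : ZipSeq α γ (h ∘ g)

/-- The dual of a monotone map: the same function between the order duals. -/
def dualMap {α β : Type u} [PartialOrder α] [PartialOrder β] (f : α → β) :
    αᵒᵈ → βᵒᵈ :=
  fun x => OrderDual.toDual (f (OrderDual.ofDual x))

------------------------------------------------------------------
-- Auxiliary infrastructure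
------------------------------------------------------------------

section Infra
variable {P : Type*} [PartialOrder P]

/-- reformulated nonsingularity -/
def NS3 (P : Type*) [PartialOrder P] : Prop :=
  ∀ a m b : P, a < m → m < b → ∃ x, a < x ∧ x < b ∧ x ≠ m

lemma nonsingular_iff_ns3 : NonsingularPoset P ↔ NS3 P := by
  constructor
  · intro h a m b ham hmb
    by_contra hcon
    push_neg at hcon
    apply h a b
    have hIcc : Set.Icc a b = {a, m, b} := by
      ext x
      simp only [Set.mem_Icc, Set.mem_insert_iff, Set.mem_singleton_iff]
      constructor
      · rintro ⟨hax, hxb⟩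
        rcases eq_or_lt_of_le hax with h1 | h1
        · exact Or.inl h1.symm
        rcases eq_or_lt_of_le hxb with h2 | h2
        · exact Or.inr (Or.inr h2)
        · exact Or.inr (Or.inl (hcon x h1 h2))
      · rintro (rfl | rfl | rfl)
        · exact ⟨le_refl _, le_of_lt (lt_trans ham hmb)⟩
        · exact ⟨le_of_lt ham, le_of_lt hmb⟩
        · exact ⟨le_of_lt (lt_trans ham hmb), le_refl _⟩
    rw [hIcc]
    exact Set.ncard_eq_three.mpr ⟨a, m, b, ne_of_lt ham, ne_of_lt (lt_trans ham hmb),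
      ne_of_lt hmb, rfl⟩
  · intro h a b hcard
    obtain ⟨x, y, z, hxy, hxz, hyz, hs⟩ := Set.ncard_eq_three.mp hcard
    have hab : a ≤ b := by
      by_contra hab
      rw [Set.Icc_eq_empty hab] at hs
      exact hxy (by
        have h1 : x ∈ (∅ : Set P) := hs ▸ (by simp : x ∈ ({x, y, z} : Set P))
        exact absurd h1 (Set.notMem_empty x))
    have haI : a ∈ Set.Icc a b := Set.mem_Icc.mpr ⟨le_refl _, hab⟩
    have hbI : b ∈ Set.Icc a b := Set.mem_Icc.mpr ⟨hab, le_refl _⟩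
    have hx : x ∈ Set.Icc a b := hs ▸ (by simp : x ∈ ({x, y, z} : Set P))
    have hy : y ∈ Set.Icc a b := hs ▸ (by simp : y ∈ ({x, y, z} : Set P))
    have hz : z ∈ Set.Icc a b := hs ▸ (by simp : z ∈ ({x, y, z} : Set P))
    have hexm : ∃ m ∈ Set.Icc a b, m ≠ a ∧ m ≠ b := by
      by_contra hcon
      push_neg at hcon
      have Hx := hcon x hx
      have Hy := hcon y hy
      have Hz := hcon z hz
      have Hx' : x = a ∨ x = b := by by_cases h1 : x = a; exact Or.inl h1; exact Or.inr (Hx h1)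
      have Hy' : y = a ∨ y = b := by by_cases h1 : y = a; exact Or.inl h1; exact Or.inr (Hy h1)
      have Hz' : z = a ∨ z = b := by by_cases h1 : z = a; exact Or.inl h1; exact Or.inr (Hz h1)
      rcases Hx' with rfl | rfl <;> rcases Hy' with h2 | h2 <;> rcases Hz' with h3 | h3 <;>
        simp_all
    obtain ⟨m, hmI, hma, hmb⟩ := hexm
    obtain ⟨ham, hambb⟩ := Set.mem_Icc.mp hmI
    have ham' : a < m := lt_of_le_of_ne ham (Ne.symm hma)
    have hmb' : m < b := lt_of_le_of_ne hambb hmb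
    obtain ⟨w, haw, hwb, hwm⟩ := h a m b ham' hmb'
    have hfin : (Set.Icc a b).Finite := by
      rw [hs]; exact (Set.finite_singleton z).insert y |>.insert x
    have hsub : ({a, m, w, b} : Set P) ⊆ Set.Icc a b := by
      intro t ht
      rcases ht with rfl | rfl | rfl | rfl
      · exact haI
      · exact hmI
      · exact Set.mem_Icc.mpr ⟨le_of_lt haw, le_of_lt hwb⟩
      · exact hbI
    have h4 : ({a, m, w, b} : Set P).ncard = 4 := by
      have hane : a ∉ ({m, w, b} : Set P) := by
        simp only [Set.mem_insert_iff, Set.mem_singleton_iff]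
        push_neg
        exact ⟨Ne.symm hma, ne_of_lt haw, ne_of_lt (lt_trans ham' hmb')⟩
      have hmne : m ∉ ({w, b} : Set P) := by
        simp only [Set.mem_insert_iff, Set.mem_singleton_iff]
        push_neg
        exact ⟨Ne.symm hwm, hmb⟩
      have hwne : w ∉ ({b} : Set P) := by simp [ne_of_lt hwb]
      rw [Set.ncard_insert_of_notMem hane ((Set.finite_singleton b).insert w |>.insert m),
        Set.ncard_insert_of_notMem hmne ((Set.finite_singleton b).insert w),
        Set.ncard_insert_of_notMem hwne (Set.finite_singleton b), Set.ncard_singleton]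
    have hle := Set.ncard_le_ncard hsub hfin
    rw [h4, hcard] at hle
    omega

lemma ns3_dual (h : NS3 P) : NS3 Pᵒᵈ := by
  intro a m b ham hmb
  obtain ⟨x, h1, h2, h3⟩ := h (OrderDual.ofDual b) (OrderDual.ofDual m) (OrderDual.ofDual a) hmb ham
  exact ⟨OrderDual.toDual x, h2, h1, fun hc => h3 (congrArg OrderDual.ofDual hc)⟩

/-- down-closed subset of the whole poset -/
def DownClosed (S : Set P) : Prop := ∀ ⦃x y : P⦄, y ∈ S → x ≤ y → x ∈ S

lemma DownClosed.preimage {Q : Type*} [PartialOrder Q] {u : P → Q} (hu : Monotone u)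
    {S : Set Q} (hS : DownClosed S) : DownClosed (u ⁻¹' S) :=
  fun _ _ hy hxy => hS hy (hu hxy)

lemma downClosed_le (b : P) : DownClosed {x | x ≤ b} := fun _ _ hy hxy => le_trans hxy hy

lemma downClosed_lt (b : P) : DownClosed {x | x < b} := fun _ _ hy hxy => lt_of_le_of_lt hxy hy

lemma isClosedSubposet_union_left {U V : Set P} (hU : DownClosed U) :
    IsClosedSubposet (U ∪ V) U :=
  ⟨Set.subset_union_left, fun a ha x _ hxa => hU ha hxa⟩

lemma isClosedSubposet_union_right {U V : Set P} (hV : DownClosed V) :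
    IsClosedSubposet (U ∪ V) V :=
  ⟨Set.subset_union_right, fun a ha x _ hxa => hV ha hxa⟩

/-- pure constructibility -/
inductive PPC {P : Type*} [PartialOrder P] : Set P → Prop where
  | cone {A : Set P} {g : P} (hg : g ∈ A) (hgreatest : ∀ x ∈ A, x ≤ g) : PPC A
  | step {Q R : Set P} (hQ : IsClosedSubposet (Q ∪ R) Q) (hR : IsClosedSubposet (Q ∪ R) R)
      (hcQ : PureCodimOneIn (Q ∩ R) Q) (hcR : PureCodimOneIn (Q ∩ R) R)
      (cQ : PPC Q) (cR : PPC R) (cQR : PPC (Q ∩ R)) : PPC (Q ∪ R)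

lemma PPC.toPC {A : Set P} (h : PPC A) : PosetConstructible A := by
  induction h with
  | cone hg hgreatest => exact PosetConstructible.cone hg hgreatest
  | step hQ hR hcQ hcR _ _ _ ihQ ihR ihQR =>
      exact PosetConstructible.step hQ hR hcQ.1 hcR.1 ihQ ihR ihQR

lemma ppc_cone (b : P) : PPC {x | x ≤ b} :=
  PPC.cone (le_refl b) (fun _ hx => hx)

/-- the strict cone is of pure codimension one in the cone -/
lemma pureCodimOne_strict_cone (c : P) : PureCodimOneIn {x | x < c} {x | x ≤ c} := by
  have hkey : ∀ a : P, IsMaxIn {x | x < c} a → ∀ b : P, CoversIn {x | x ≤ c} a b → b = c := by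
    intro a ⟨hac, hmax⟩ b ⟨_, hbc, hab, _⟩
    by_contra hbc'
    have : b < c := lt_of_le_of_ne hbc hbc'
    exact absurd (hmax b this (le_of_lt hab)) (ne_of_gt hab)
  constructor
  · intro a ha
    refine ⟨c, ⟨le_refl c, fun x hx hcx => le_antisymm hx hcx⟩, le_of_lt ha.1, le_refl c, ha.1, ?_⟩
    intro x hx hax hxc
    exact absurd (ha.2 x hxc hax.le) (ne_of_gt hax)
  · intro a ha b hb
    rw [hkey a ha b hb]
    exact ⟨le_refl c, fun x hx hcx => le_antisymm hx hcx⟩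

/-- if `a ⋖ b` then `⌊a⌋` is of pure codimension one in `⌊b⌋` -/
lemma pureCodimOne_cone_cone {a b : P} (hab : a < b) (hcov : ∀ z, a < z → z < b → False) :
    PureCodimOneIn {x | x ≤ a} {x | x ≤ b} := by
  have hmaxa : ∀ x : P, IsMaxIn {x | x ≤ a} x → x = a := by
    intro x ⟨hx, hmax⟩
    exact (hmax a (le_refl a) hx).symm
  have hmaxb : IsMaxIn {x | x ≤ b} b := ⟨le_refl b, fun x hx hbx => le_antisymm hx hbx⟩
  have hcov' : ∀ x : P, IsMaxIn {x | x ≤ a} x → ∀ z : P, CoversIn {x | x ≤ b} x z → z = b := by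
    intro x hx z ⟨_, hzb, hxz, _⟩
    have hxa := hmaxa x hx
    subst hxa
    by_contra hzb'
    exact hcov z hxz (lt_of_le_of_ne hzb hzb')
  constructor
  · intro x hx
    have hxa := hmaxa x hx
    subst hxa
    exact ⟨b, hmaxb, le_of_lt hab, le_refl b, hab, fun z hz hxz hzb => hcov z hxz hzb⟩
  · intro x hx z hz
    rw [hcov' x hx z hz]
    exact hmaxb

/-- a map is good if it pulls back pure codimension-one pairs of down-closed sets -/
def GoodMap {P Q : Type*} [PartialOrder P] [PartialOrder Q] (u : P → Q) : Prop :=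
  Monotone u ∧ ∀ A B : Set Q, DownClosed A → DownClosed B → A ⊆ B → PureCodimOneIn A B →
    PureCodimOneIn (u ⁻¹' A) (u ⁻¹' B)

lemma goodMap_id : GoodMap (id : P → P) := ⟨monotone_id, fun A B _ _ _ h => h⟩

lemma GoodMap.comp {Q R : Type*} [PartialOrder Q] [PartialOrder R] {g : P → Q} {u : Q → R}
    (hg : GoodMap g) (hu : GoodMap u) : GoodMap (u ∘ g) := by
  refine ⟨hu.1.comp hg.1, fun A B hA hB hAB hC => ?_⟩
  rw [Set.preimage_comp]
  exact hg.2 _ _ (hA.preimage hu.1) (hB.preimage hu.1) (fun x hx => hAB hx)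
    (hu.2 A B hA hB hAB hC)

/-- a finite nonempty set has a minimal element -/
lemma exists_minimal_mem {S : Set P} (hfin : S.Finite) {x : P} (hx : x ∈ S) :
    ∃ m ∈ S, ∀ y ∈ S, ¬ y < m := by
  obtain ⟨m, hm, hmin⟩ := hfin.toFinset.exists_minimal ⟨x, hfin.mem_toFinset.mpr hx⟩
  exact ⟨m, hfin.mem_toFinset.mp hm, fun y hy hlt => lt_irrefl _ (lt_of_lt_of_le hlt (hmin (hfin.mem_toFinset.mpr hy) hlt.le))⟩

lemma mem_triple_swap {x a b c : P} :
    x ∈ ({a, c, b} : Set P) ↔ x ∈ ({a, b, c} : Set P) := by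
  simp only [Set.mem_insert_iff, Set.mem_singleton_iff]; tauto

end Infra

------------------------------------------------------------------
-- Dual zipping structure
------------------------------------------------------------------

structure DZ {P Q : Type u} [PartialOrder P] [PartialOrder Q] (u : P → Q) (p q r : P) :
    Prop where
  qr : ¬ q ≤ r
  rq : ¬ r ≤ q
  pq : p < q
  pq_cov : ∀ x, p < x → x < q → False
  pr : p < r
  pr_cov : ∀ x, p < x → x < r → False
  upward : ∀ s, p < s → s ≠ q → s ≠ r → q < s ∧ r < s
  dnward : ∀ s, s < q → s < r → s ≤ p
  mono : Monotone u
  surj : Function.Surjective u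
  fib : ∀ x y, u x = u y ↔ x = y ∨ (x ∈ ({p, q, r} : Set P) ∧ y ∈ ({p, q, r} : Set P))
  ord : ∀ x y, x ∉ ({p, q, r} : Set P) → y ∉ ({p, q, r} : Set P) → (u x ≤ u y ↔ x ≤ y)
  ordp : ∀ x, x ∉ ({p, q, r} : Set P) → (u p ≤ u x ↔ p ≤ x ∨ q ≤ x ∨ r ≤ x)
  pord : ∀ x, x ∉ ({p, q, r} : Set P) → (u x ≤ u p ↔ x ≤ p ∨ x ≤ q ∨ x ≤ r)

namespace DZ

variable {P Q : Type u} [PartialOrder P] [PartialOrder Q] {u : P → Q} {p q r : P}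
  (hz : DZ u p q r)

lemma swap (hz : DZ u p q r) : DZ u p r q where
  qr := hz.rq
  rq := hz.qr
  pq := hz.pr
  pq_cov := hz.pr_cov
  pr := hz.pq
  pr_cov := hz.pq_cov
  upward := fun s h1 h2 h3 => (hz.upward s h1 h3 h2).symm
  dnward := fun s h1 h2 => hz.dnward s h2 h1
  mono := hz.mono
  surj := hz.surj
  fib := by
    have hset : ({p, r, q} : Set P) = {p, q, r} := by
      ext t; simp only [Set.mem_insert_iff, Set.mem_singleton_iff]; tauto
    intro x y
    rw [hset, hz.fib]
  ord := by
    have hset : ({p, r, q} : Set P) = {p, q, r} := by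
      ext t; simp only [Set.mem_insert_iff, Set.mem_singleton_iff]; tauto
    intro x y hx hy
    rw [hset] at hx hy
    exact hz.ord x y hx hy
  ordp := by
    have hset : ({p, r, q} : Set P) = {p, q, r} := by
      ext t; simp only [Set.mem_insert_iff, Set.mem_singleton_iff]; tauto
    intro x hx
    rw [hset] at hx
    rw [hz.ordp x hx]
    tauto
  pord := by
    have hset : ({p, r, q} : Set P) = {p, q, r} := by
      ext t; simp only [Set.mem_insert_iff, Set.mem_singleton_iff]; tauto
    intro x hx
    rw [hset] at hx
    rw [hz.pord x hx]
    tauto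

lemma pmem : p ∈ ({p, q, r} : Set P) := by simp
lemma qmem : q ∈ ({p, q, r} : Set P) := by simp
lemma rmem : r ∈ ({p, q, r} : Set P) := by simp

include hz

lemma qner : q ≠ r := fun h => hz.qr (le_of_eq h)

lemma pltq : p < q := hz.pq
lemma pltr : p < r := hz.pr

/-- for `x ∉ {p,q,r}`, all images are distinct from `u p` -/
lemma une {x : P} (hx : x ∉ ({p, q, r} : Set P)) : u x ≠ u p := by
  intro h
  rcases (hz.fib x p).mp h with h1 | ⟨h1, _⟩
  · exact hx (h1 ▸ pmem)
  · exact hx h1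

lemma uinj {x y : P} (hx : x ∉ ({p, q, r} : Set P)) : u x = u y ↔ x = y := by
  constructor
  · intro h
    rcases (hz.fib x y).mp h with h1 | ⟨h1, _⟩
    · exact h1
    · exact absurd h1 hx
  · intro h; rw [h]

lemma ult {x y : P} (hx : x ∉ ({p, q, r} : Set P)) (hy : y ∉ ({p, q, r} : Set P)) :
    u x < u y ↔ x < y := by
  rw [lt_iff_le_and_ne, lt_iff_le_and_ne, hz.ord x y hx hy]
  constructor
  · rintro ⟨h1, h2⟩
    exact ⟨h1, fun h => h2 ((hz.uinj hx).mpr h)⟩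
  · rintro ⟨h1, h2⟩
    exact ⟨h1, fun h => h2 ((hz.uinj hx).mp h)⟩

/-- anything above p (outside the fiber) is above q and r -/
lemma above_p {y : P} (hy : y ∉ ({p, q, r} : Set P)) (h : p ≤ y) : q < y ∧ r < y := by
  have hpy : p < y := lt_of_le_of_ne h (by intro hc; exact hy (hc ▸ pmem))
  exact hz.upward y hpy (fun hc => hy (hc ▸ qmem)) (fun hc => hy (hc ▸ rmem))

lemma up_le_iff {y : P} (hy : y ∉ ({p, q, r} : Set P)) :
    u p ≤ u y ↔ (p < y ∧ q < y ∧ r < y) := by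
  rw [hz.ordp y hy]
  constructor
  · rintro (h | h | h)
    · obtain ⟨h1, h2⟩ := hz.above_p hy h
      exact ⟨lt_of_le_of_ne h (fun hc => hy (hc ▸ pmem)), h1, h2⟩
    · have hqy : q < y := lt_of_le_of_ne h (fun hc => hy (hc ▸ qmem))
      have hpy : p < y := lt_trans hz.pq hqy
      exact ⟨hpy, hqy, (hz.above_p hy (le_of_lt hpy)).2⟩
    · have hry : r < y := lt_of_le_of_ne h (fun hc => hy (hc ▸ rmem))
      have hpy : p < y := lt_trans hz.pr hry
      exact ⟨hpy, (hz.above_p hy (le_of_lt hpy)).1, hry⟩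
  · rintro ⟨h1, _, _⟩
    exact Or.inl (le_of_lt h1)

lemma le_up_iff {x : P} (hx : x ∉ ({p, q, r} : Set P)) :
    u x ≤ u p ↔ (x < q ∨ x < r) := by
  rw [hz.pord x hx]
  constructor
  · rintro (h | h | h)
    · exact Or.inl (lt_of_le_of_lt h hz.pq)
    · exact Or.inl (lt_of_le_of_ne h (fun hc => hx (hc ▸ qmem)))
    · exact Or.inr (lt_of_le_of_ne h (fun hc => hx (hc ▸ rmem)))
  · rintro (h | h)
    · exact Or.inr (Or.inl (le_of_lt h))
    · exact Or.inr (Or.inr (le_of_lt h))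

/-- preimage of the cone over `u y` for `y` off the fiber -/
lemma preimage_cone {y : P} (hy : y ∉ ({p, q, r} : Set P)) :
    u ⁻¹' {z | z ≤ u y} = {x | x ≤ y} := by
  have key : u p ≤ u y ↔ (p < y ∧ q < y ∧ r < y) := hz.up_le_iff hy
  ext x
  simp only [Set.mem_preimage, Set.mem_setOf_eq]
  by_cases hx : x ∈ ({p, q, r} : Set P)
  · have hux : u x = u p := (hz.fib x p).mpr (Or.inr ⟨hx, pmem⟩)
    rw [hux, key]
    rcases hx with h | h | h <;> rw [h]
    · constructor
      · rintro ⟨h1, _, _⟩; exact le_of_lt h1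
      · intro h1
        obtain ⟨h2, h3⟩ := hz.above_p hy h1
        exact ⟨lt_of_le_of_ne h1 (fun hc => hy (hc ▸ pmem)), h2, h3⟩
    · constructor
      · rintro ⟨_, h1, _⟩; exact le_of_lt h1
      · intro h1
        have hqy : q < y := lt_of_le_of_ne h1 (fun hc => hy (hc ▸ qmem))
        have hpy : p < y := lt_trans hz.pq hqy
        exact ⟨hpy, hqy, (hz.above_p hy (le_of_lt hpy)).2⟩
    · constructor
      · rintro ⟨_, _, h1⟩; exact le_of_lt h1
      · intro h1
        have hry : r < y := lt_of_le_of_ne h1 (fun hc => hy (hc ▸ rmem))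
        have hpy : p < y := lt_trans hz.pr hry
        exact ⟨hpy, (hz.above_p hy (le_of_lt hpy)).1, hry⟩
  · exact hz.ord x y hx hy

lemma preimage_cone_p : u ⁻¹' {z | z ≤ u p} = {x | x ≤ q} ∪ {x | x ≤ r} := by
  ext x
  simp only [Set.mem_preimage, Set.mem_setOf_eq, Set.mem_union]
  by_cases hx : x ∈ ({p, q, r} : Set P)
  · have hux : u x = u p := (hz.fib x p).mpr (Or.inr ⟨hx, pmem⟩)
    rw [hux]
    simp only [le_refl, true_iff]
    rcases hx with h | h | h <;> rw [h]
    · exact Or.inl (le_of_lt hz.pq)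
    · exact Or.inl (le_refl q)
    · exact Or.inr (le_refl r)
  · rw [hz.le_up_iff hx]
    constructor
    · rintro (h | h)
      · exact Or.inl (le_of_lt h)
      · exact Or.inr (le_of_lt h)
    · rintro (h | h)
      · exact Or.inl (lt_of_le_of_ne h (fun hc => hx (hc ▸ qmem)))
      · exact Or.inr (lt_of_le_of_ne h (fun hc => hx (hc ▸ rmem)))

lemma cone_inter : ({x | x ≤ q} ∩ {x | x ≤ r} : Set P) = {x | x ≤ p} := by
  ext x
  simp only [Set.mem_inter_iff, Set.mem_setOf_eq]
  constructor
  · rintro ⟨h1, h2⟩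
    have h1' : x < q := lt_of_le_of_ne h1 (by rintro rfl; exact hz.qr h2)
    have h2' : x < r := lt_of_le_of_ne h2 (by rintro rfl; exact hz.rq h1)
    exact hz.dnward x h1' h2'
  · intro h
    exact ⟨le_trans h (le_of_lt hz.pq), le_trans h (le_of_lt hz.pr)⟩


lemma up_lt_iff {y : P} (hy : y ∉ ({p, q, r} : Set P)) :
    u p < u y ↔ (p < y ∧ q < y ∧ r < y) := by
  rw [lt_iff_le_and_ne, hz.up_le_iff hy]
  constructor
  · rintro ⟨h, _⟩; exact h
  · intro h; exact ⟨h, fun hc => hz.une hy hc.symm⟩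

lemma lt_up_iff {x : P} (hx : x ∉ ({p, q, r} : Set P)) :
    u x < u p ↔ (x < q ∨ x < r) := by
  rw [lt_iff_le_and_ne, hz.le_up_iff hx]
  constructor
  · rintro ⟨h, _⟩; exact h
  · intro h; exact ⟨h, hz.une hx⟩

lemma rep (C : Q) : ∃ c : P, u c = C ∧ (c ∉ ({p, q, r} : Set P) ∨ p = c) := by
  obtain ⟨c₀, hc₀⟩ := hz.surj C
  by_cases h : c₀ ∈ ({p, q, r} : Set P)
  · exact ⟨p, by rw [← hc₀]; exact ((hz.fib p c₀).mpr (Or.inr ⟨pmem, h⟩)), Or.inr rfl⟩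
  · exact ⟨c₀, hc₀, Or.inl h⟩

lemma notmem_of_gt_q {x : P} (h : q < x) : x ∉ ({p, q, r} : Set P) := by
  rintro (h1 | h1 | h1) <;> rw [h1] at h
  · exact lt_asymm hz.pq h
  · exact lt_irrefl q h
  · exact hz.qr (le_of_lt h)

lemma notmem_of_gt_r {x : P} (h : r < x) : x ∉ ({p, q, r} : Set P) := by
  rintro (h1 | h1 | h1) <;> rw [h1] at h
  · exact lt_asymm hz.pr h
  · exact hz.rq (le_of_lt h)
  · exact lt_irrefl r h

lemma notmem_of_lt_q {x : P} (h : x < q) (hxp : x ≠ p) : x ∉ ({p, q, r} : Set P) := by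
  rintro (h1 | h1 | h1)
  · exact hxp h1
  · rw [h1] at h; exact lt_irrefl q h
  · rw [h1] at h; exact hz.rq (le_of_lt h)

lemma notmem_of_lt_r {x : P} (h : x < r) (hxp : x ≠ p) : x ∉ ({p, q, r} : Set P) := by
  rintro (h1 | h1 | h1)
  · exact hxp h1
  · rw [h1] at h; exact hz.qr (le_of_lt h)
  · rw [h1] at h; exact lt_irrefl r h

lemma notmem_of_lt_p {x : P} (h : x < p) : x ∉ ({p, q, r} : Set P) :=
  hz.notmem_of_lt_q (lt_trans h hz.pq) (ne_of_lt h)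

/-- images of off-fiber elements above p -/
lemma up_lt_of_gt_q {y : P} (hy : y ∉ ({p, q, r} : Set P)) (h : q < y) : u p < u y := by
  rw [hz.up_lt_iff hy]
  have hpy : p < y := lt_trans hz.pq h
  exact ⟨hpy, h, (hz.above_p hy (le_of_lt hpy)).2⟩

lemma up_lt_of_gt_r {y : P} (hy : y ∉ ({p, q, r} : Set P)) (h : r < y) : u p < u y := by
  rw [hz.up_lt_iff hy]
  have hpy : p < y := lt_trans hz.pr h
  exact ⟨hpy, (hz.above_p hy (le_of_lt hpy)).1, h⟩

/-- a dual zipping preserves nonsingularity -/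
lemma ns3 (hP : NS3 P) : NS3 Q := by
  intro C M D hCM hMD
  obtain ⟨c, rfl, hc⟩ := hz.rep C
  obtain ⟨m, rfl, hm⟩ := hz.rep M
  obtain ⟨d, rfl, hd⟩ := hz.rep D
  rcases hm with hm | rfl
  · -- m off the fiber
    rcases hc with hc | rfl
    · rcases hd with hd | rfl
      · -- all off fiber
        have hcm : c < m := (hz.ult hc hm).mp hCM
        have hmd : m < d := (hz.ult hm hd).mp hMD
        obtain ⟨x, hcx, hxd, hxm⟩ := hP c m d hcm hmd
        by_cases hx : x ∈ ({p, q, r} : Set P)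
        · -- use up as the third element
          refine ⟨u p, ?_, ?_, fun hc' => hz.une hm hc'.symm⟩
          · rw [hz.lt_up_iff hc]
            rcases hx with h1 | h1 | h1 <;> rw [h1] at hcx
            · exact Or.inl (lt_trans hcx hz.pq)
            · exact Or.inl hcx
            · exact Or.inr hcx
          · rcases hx with h1 | h1 | h1 <;> rw [h1] at hxd
            · rw [hz.up_lt_iff hd]
              exact ⟨hxd, hz.above_p hd (le_of_lt hxd)⟩
            · exact hz.up_lt_of_gt_q hd hxd
            · exact hz.up_lt_of_gt_r hd hxd
        · exact ⟨u x, (hz.ult hc hx).mpr hcx, (hz.ult hx hd).mpr hxd,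
            fun hc' => hxm ((hz.uinj hx).mp hc')⟩
      · -- d = p
        have hcm : c < m := (hz.ult hc hm).mp hCM
        have hm' : m < q ∨ m < r := (hz.lt_up_iff hm).mp hMD
        by_cases hmp : m < p
        · obtain ⟨x, hcx, hxp, hxm⟩ := hP c m p hcm hmp
          have hx : x ∉ ({p, q, r} : Set P) := hz.notmem_of_lt_p hxp
          exact ⟨u x, (hz.ult hc hx).mpr hcx,
            (hz.lt_up_iff hx).mpr (Or.inl (lt_trans hxp hz.pq)),
            fun hc' => hxm ((hz.uinj hx).mp hc')⟩
        · rcases hm' with hmq | hmr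
          · -- ¬ m < p, m < q
            obtain ⟨x, hcx, hxq, hxm⟩ := hP c m q hcm hmq
            by_cases hxp : x = p
            · -- c < p < q
              rw [hxp] at hcx
              obtain ⟨w, hcw, hwq, hwp⟩ := hP c p q hcx hz.pq
              have hw : w ∉ ({p, q, r} : Set P) := hz.notmem_of_lt_q hwq hwp
              by_cases hwm : w = m
              · -- use the r side
                obtain ⟨w', hcw', hw'r, hw'p⟩ := hP c p r hcx hz.pr
                have hw' : w' ∉ ({p, q, r} : Set P) := hz.notmem_of_lt_r hw'r hw'p
                have hw'm : w' ≠ m := by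
                  rintro rfl
                  exact hmp (lt_of_le_of_ne (hz.dnward w' hmq hw'r)
                    (by rintro rfl; exact hw' pmem) : w' < p)
                exact ⟨u w', (hz.ult hc hw').mpr hcw',
                  (hz.lt_up_iff hw').mpr (Or.inr hw'r),
                  fun hc' => hw'm ((hz.uinj hw').mp hc')⟩
              · exact ⟨u w, (hz.ult hc hw).mpr hcw,
                  (hz.lt_up_iff hw).mpr (Or.inl hwq),
                  fun hc' => hwm ((hz.uinj hw).mp hc')⟩
            · have hx : x ∉ ({p, q, r} : Set P) := hz.notmem_of_lt_q hxq hxp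
              exact ⟨u x, (hz.ult hc hx).mpr hcx, (hz.lt_up_iff hx).mpr (Or.inl hxq),
                fun hc' => hxm ((hz.uinj hx).mp hc')⟩
          · -- ¬ m < p, m < r (mirror)
            obtain ⟨x, hcx, hxr, hxm⟩ := hP c m r hcm hmr
            by_cases hxp : x = p
            · rw [hxp] at hcx
              obtain ⟨w, hcw, hwr, hwp⟩ := hP c p r hcx hz.pr
              have hw : w ∉ ({p, q, r} : Set P) := hz.notmem_of_lt_r hwr hwp
              by_cases hwm : w = m
              · obtain ⟨w', hcw', hw'q, hw'p⟩ := hP c p q hcx hz.pq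
                have hw' : w' ∉ ({p, q, r} : Set P) := hz.notmem_of_lt_q hw'q hw'p
                have hw'm : w' ≠ m := by
                  rintro rfl
                  exact hmp (lt_of_le_of_ne (hz.dnward w' hw'q hmr)
                    (by rintro rfl; exact hw' pmem) : w' < p)
                exact ⟨u w', (hz.ult hc hw').mpr hcw',
                  (hz.lt_up_iff hw').mpr (Or.inl hw'q),
                  fun hc' => hw'm ((hz.uinj hw').mp hc')⟩
              · exact ⟨u w, (hz.ult hc hw).mpr hcw,
                  (hz.lt_up_iff hw).mpr (Or.inr hwr),
                  fun hc' => hwm ((hz.uinj hw).mp hc')⟩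
            · have hx : x ∉ ({p, q, r} : Set P) := hz.notmem_of_lt_r hxr hxp
              exact ⟨u x, (hz.ult hc hx).mpr hcx, (hz.lt_up_iff hx).mpr (Or.inr hxr),
                fun hc' => hxm ((hz.uinj hx).mp hc')⟩
    · -- c = p
      rcases hd with hd | rfl
      · -- u p < u m < u d
        obtain ⟨hpm, hqm, hrm⟩ := (hz.up_lt_iff hm).mp hCM
        have hmd : m < d := (hz.ult hm hd).mp hMD
        obtain ⟨x, hqx, hxd, hxm⟩ := hP q m d hqm hmd
        have hx : x ∉ ({p, q, r} : Set P) := hz.notmem_of_gt_q hqx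
        exact ⟨u x, hz.up_lt_of_gt_q hx hqx, (hz.ult hx hd).mpr hxd,
          fun hc' => hxm ((hz.uinj hx).mp hc')⟩
      · exact absurd (lt_trans hCM hMD) (lt_irrefl _)
  · -- m = p
    have hc' : c ∉ ({p, q, r} : Set P) := by
      rcases hc with hc | rfl
      · exact hc
      · exact absurd hCM (lt_irrefl _)
    have hd' : d ∉ ({p, q, r} : Set P) := by
      rcases hd with hd | rfl
      · exact hd
      · exact absurd hMD (lt_irrefl _)
    have hCM' : c < q ∨ c < r := (hz.lt_up_iff hc').mp hCM
    obtain ⟨hpd, hqd, hrd⟩ := (hz.up_lt_iff hd').mp hMD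
    have main : ∀ x : P, x ∉ ({p, q, r} : Set P) → c < x → x < d →
        ∃ X, u c < X ∧ X < u d ∧ X ≠ u p := by
      intro x hx hcx hxd
      exact ⟨u x, (hz.ult hc' hx).mpr hcx, (hz.ult hx hd').mpr hxd, hz.une hx⟩
    by_cases hcp : c < p
    · obtain ⟨x, hcx, hxq, hxp⟩ := hP c p q hcp hz.pq
      exact main x (hz.notmem_of_lt_q hxq hxp) hcx (lt_trans hxq hqd)
    · rcases hCM' with hcq | hcr
      · obtain ⟨x, hcx, hxd, hxq⟩ := hP c q d hcq hqd
        have hx : x ∉ ({p, q, r} : Set P) := by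
          rintro (h1 | h1 | h1)
          · rw [h1] at hcx; exact hcp hcx
          · exact hxq h1
          · rw [h1] at hcx
            exact hcp (lt_of_le_of_ne (hz.dnward c hcq hcx)
              (fun h2 => hc' (h2 ▸ pmem)))
        exact main x hx hcx hxd
      · obtain ⟨x, hcx, hxd, hxr⟩ := hP c r d hcr hrd
        have hx : x ∉ ({p, q, r} : Set P) := by
          rintro (h1 | h1 | h1)
          · rw [h1] at hcx; exact hcp hcx
          · rw [h1] at hcx
            exact hcp (lt_of_le_of_ne (hz.dnward c hcx hcr)
              (fun h2 => hc' (h2 ▸ pmem)))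
          · exact hxr h1
        exact main x hx hcx hxd



/-- image of an off-fiber maximal element of a preimage is maximal -/
lemma max_image {A : Set Q} {a : P} (ha : a ∉ ({p, q, r} : Set P))
    (hmax : IsMaxIn (u ⁻¹' A) a) : IsMaxIn A (u a) := by
  refine ⟨hmax.1, ?_⟩
  intro c hc hle
  by_contra hne
  obtain ⟨w, rfl⟩ := hz.surj c
  by_cases hw : w ∈ ({p, q, r} : Set P)
  · have hupw : u w = u p := (hz.fib w p).mpr (Or.inr ⟨hw, pmem⟩)
    rw [hupw] at hc hle hne
    have hqA : q ∈ u ⁻¹' A := by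
      have : u q = u p := (hz.fib q p).mpr (Or.inr ⟨qmem, pmem⟩)
      simpa [Set.mem_preimage, this] using hc
    have hrA : r ∈ u ⁻¹' A := by
      have : u r = u p := (hz.fib r p).mpr (Or.inr ⟨rmem, pmem⟩)
      simpa [Set.mem_preimage, this] using hc
    rcases (hz.le_up_iff ha).mp hle with h | h
    · exact absurd (hmax.2 q hqA h.le) (ne_of_gt h)
    · exact absurd (hmax.2 r hrA h.le) (ne_of_gt h)
  · have haw : a ≤ w := (hz.ord a w ha hw).mp hle
    exact hne (congrArg u (hmax.2 w hc haw))

/-- if q is maximal in the preimage of A then u p is maximal in A -/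
lemma max_image_q {A : Set Q} (hmax : IsMaxIn (u ⁻¹' A) q) : IsMaxIn A (u p) := by
  have hqp : u q = u p := (hz.fib q p).mpr (Or.inr ⟨qmem, pmem⟩)
  refine ⟨by rw [← hqp]; exact hmax.1, ?_⟩
  intro c hc hle
  obtain ⟨w, rfl⟩ := hz.surj c
  by_cases hw : w ∈ ({p, q, r} : Set P)
  · exact (hz.fib w p).mpr (Or.inr ⟨hw, pmem⟩)
  · by_cases heq : u p = u w
    · exact heq.symm
    · have h3 := (hz.up_lt_iff hw).mp (lt_of_le_of_ne hle heq)
      exact absurd (hmax.2 w hc h3.2.1.le) (ne_of_gt h3.2.1)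

section Crux
variable [Finite P] [Finite Q]

/-- an off-fiber covering in the preimage of B maps to a covering in B -/
lemma cover_transfer {B : Set Q} {a z : P} (ha : a ∉ ({p, q, r} : Set P))
    (hzn : z ∉ ({p, q, r} : Set P)) (hcov : CoversIn (u ⁻¹' B) a z) :
    CoversIn B (u a) (u z) := by
  obtain ⟨haB, hzB, haz, hbet⟩ := hcov
  refine ⟨haB, hzB, (hz.ult ha hzn).mpr haz, ?_⟩
  intro w hwB hlt1 hlt2
  obtain ⟨v, rfl⟩ := hz.surj w
  by_cases hv : v ∈ ({p, q, r} : Set P)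
  · have hupv : u v = u p := (hz.fib v p).mpr (Or.inr ⟨hv, pmem⟩)
    rw [hupv] at hwB hlt1 hlt2
    have h1 : a < q ∨ a < r := (hz.lt_up_iff ha).mp hlt1
    have h2 := (hz.up_lt_iff hzn).mp hlt2
    have hqB : q ∈ u ⁻¹' B := by
      have : u q = u p := (hz.fib q p).mpr (Or.inr ⟨qmem, pmem⟩)
      simpa [Set.mem_preimage, this] using hwB
    have hrB : r ∈ u ⁻¹' B := by
      have : u r = u p := (hz.fib r p).mpr (Or.inr ⟨rmem, pmem⟩)
      simpa [Set.mem_preimage, this] using hwB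
    rcases h1 with h | h
    · exact hbet q hqB h h2.2.1
    · exact hbet r hrB h h2.2.2
  · exact hbet v hwB ((hz.ult ha hv).mp hlt1) ((hz.ult hv hzn).mp hlt2)

/-- key lemma: p cannot cover a maximal element of the preimage of A inside
the preimage of B (uses nonsingularity) -/
lemma no_cover_p {A B : Set Q} (hP : NS3 P) (hBd : DownClosed B) (hAB : A ⊆ B)
    (hpure : PureCodimOneIn A B) {a : P} (ha : a ∉ ({p, q, r} : Set P))
    (hmax : IsMaxIn (u ⁻¹' A) a) (hcov : CoversIn (u ⁻¹' B) a p) : False := by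
  obtain ⟨haB, hpB, hap, hbet⟩ := hcov
  have hB'd : DownClosed (u ⁻¹' B) := hBd.preimage hz.mono
  have hqB : q ∈ u ⁻¹' B := by
    have h1 : u q = u p := (hz.fib q p).mpr (Or.inr ⟨qmem, pmem⟩)
    simpa [Set.mem_preimage, h1] using hpB
  obtain ⟨v, hav, hvq, hvp⟩ := hP a p q hap hz.pq
  have hv : v ∉ ({p, q, r} : Set P) := hz.notmem_of_lt_q hvq hvp
  have hvB : v ∈ u ⁻¹' B := hB'd hqB hvq.le
  have h1 : u a < u v := (hz.ult ha hv).mpr hav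
  have h2 : u v < u p := (hz.lt_up_iff hv).mpr (Or.inl hvq)
  obtain ⟨w₀, hw₀, hw₀min⟩ := exists_minimal_mem (Set.toFinite
    {w : Q | w ∈ B ∧ u a < w ∧ w ≤ u v}) (⟨hvB, h1, le_refl _⟩ :
    u v ∈ {w : Q | w ∈ B ∧ u a < w ∧ w ≤ u v})
  have hcovw : CoversIn B (u a) w₀ := by
    refine ⟨hAB hmax.1, hw₀.1, hw₀.2.1, ?_⟩
    intro x hx hax hxw
    exact hw₀min x ⟨hx, hax, le_trans hxw.le hw₀.2.2⟩ hxw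
  have hmaxw : IsMaxIn B w₀ := hpure.2 (u a) (hz.max_image ha hmax) w₀ hcovw
  have hwp : w₀ < u p := lt_of_le_of_lt hw₀.2.2 h2
  exact absurd (hmaxw.2 (u p) hpB hwp.le) (ne_of_gt hwp)

/-- if q covers an off-fiber maximal element of the preimage of A in the preimage of B,
then q is maximal in the preimage of B -/
lemma cover_q_max {A B : Set Q} (hAB : A ⊆ B) (hpure : PureCodimOneIn A B) {a : P}
    (ha : a ∉ ({p, q, r} : Set P)) (hmax : IsMaxIn (u ⁻¹' A) a)
    (hcov : CoversIn (u ⁻¹' B) a q) : IsMaxIn (u ⁻¹' B) q := by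
  obtain ⟨haB, hqB, haq, hbet⟩ := hcov
  have hpB : u p ∈ B := by
    have h1 : u q = u p := (hz.fib q p).mpr (Or.inr ⟨qmem, pmem⟩)
    rw [← h1]; exact hqB
  have h1 : u a < u p := (hz.lt_up_iff ha).mpr (Or.inl haq)
  -- u p covers u a in B
  have hcovQ : CoversIn B (u a) (u p) := by
    refine ⟨hAB hmax.1, hpB, h1, ?_⟩
    intro w hwB hlt1 hlt2
    obtain ⟨v, rfl⟩ := hz.surj w
    by_cases hv : v ∈ ({p, q, r} : Set P)
    · have h2 : u v = u p := (hz.fib v p).mpr (Or.inr ⟨hv, pmem⟩)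
      rw [h2] at hlt2
      exact lt_irrefl _ hlt2
    · have hav : a < v := (hz.ult ha hv).mp hlt1
      rcases (hz.lt_up_iff hv).mp hlt2 with h3 | h3
      · exact hbet v hwB hav h3
      · -- v < r : contradiction via purity and minimal cover
        obtain ⟨w₀, hw₀, hw₀min⟩ := exists_minimal_mem (Set.toFinite
          {w' : Q | w' ∈ B ∧ u a < w' ∧ w' ≤ u v}) (⟨hwB, hlt1, le_refl _⟩ :
          u v ∈ {w' : Q | w' ∈ B ∧ u a < w' ∧ w' ≤ u v})
        have hcovw : CoversIn B (u a) w₀ := by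
          refine ⟨hAB hmax.1, hw₀.1, hw₀.2.1, ?_⟩
          intro x hx hax hxw
          exact hw₀min x ⟨hx, hax, le_trans hxw.le hw₀.2.2⟩ hxw
        have hmaxw : IsMaxIn B w₀ := hpure.2 (u a) (hz.max_image ha hmax) w₀ hcovw
        have hwp : w₀ < u p := lt_of_le_of_lt hw₀.2.2 hlt2
        exact absurd (hmaxw.2 (u p) hpB hwp.le) (ne_of_gt hwp)
  have hmaxQ : IsMaxIn B (u p) := hpure.2 (u a) (hz.max_image ha hmax) (u p) hcovQ
  refine ⟨hqB, ?_⟩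
  intro x hx hqx
  by_contra hne
  have hqx' : q < x := lt_of_le_of_ne hqx (Ne.symm hne)
  have hxn : x ∉ ({p, q, r} : Set P) := hz.notmem_of_gt_q hqx'
  have h4 : u p < u x := hz.up_lt_of_gt_q hxn hqx'
  exact absurd (hmaxQ.2 (u x) hx h4.le) (ne_of_gt h4)

/-- an off-fiber cover of an off-fiber maximal element is maximal -/
lemma cover_off_max {A B : Set Q} (hAB : A ⊆ B) (hpure : PureCodimOneIn A B) {a b : P}
    (ha : a ∉ ({p, q, r} : Set P)) (hb : b ∉ ({p, q, r} : Set P))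
    (hmax : IsMaxIn (u ⁻¹' A) a) (hcov : CoversIn (u ⁻¹' B) a b) :
    IsMaxIn (u ⁻¹' B) b := by
  have hcovQ : CoversIn B (u a) (u b) := hz.cover_transfer ha hb hcov
  have hmaxQ : IsMaxIn B (u b) := hpure.2 (u a) (hz.max_image ha hmax) (u b) hcovQ
  refine ⟨hcov.2.1, ?_⟩
  intro x hx hbx
  by_contra hne
  have hbx' : b < x := lt_of_le_of_ne hbx (Ne.symm hne)
  by_cases hxn : x ∈ ({p, q, r} : Set P)
  · -- then u b < u p ∈ B, contradicting maximality of u b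
    have hupx : u x = u p := (hz.fib x p).mpr (Or.inr ⟨hxn, pmem⟩)
    have h1 : u b < u p := by
      rw [hz.lt_up_iff hb]
      rcases hxn with h2 | h2 | h2 <;> rw [h2] at hbx'
      · exact Or.inl (lt_trans hbx' hz.pq)
      · exact Or.inl hbx'
      · exact Or.inr hbx'
    have hpB : u p ∈ B := by rw [← hupx]; exact hx
    exact absurd (hmaxQ.2 (u p) hpB h1.le) (ne_of_gt h1)
  · have h1 : u b < u x := (hz.ult hb hxn).mpr hbx'
    exact absurd (hmaxQ.2 (u x) hx h1.le) (ne_of_gt h1)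

/-- covers of q in the preimage of B map maps to covers of u p, hence are maximal -/
lemma cover_from_q {A B : Set Q} (hAB : A ⊆ B) (hpure : PureCodimOneIn A B)
    (hmax : IsMaxIn (u ⁻¹' A) q) {b : P} (hcov : CoversIn (u ⁻¹' B) q b) :
    IsMaxIn (u ⁻¹' B) b := by
  obtain ⟨hqB, hbB, hqb, hbet⟩ := hcov
  have hb : b ∉ ({p, q, r} : Set P) := hz.notmem_of_gt_q hqb
  have hpB : u p ∈ B := by
    have h1 : u q = u p := (hz.fib q p).mpr (Or.inr ⟨qmem, pmem⟩)
    rw [← h1]; exact hqB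
  have hcovQ : CoversIn B (u p) (u b) := by
    refine ⟨hpB, hbB, hz.up_lt_of_gt_q hb hqb, ?_⟩
    intro w hwB hlt1 hlt2
    obtain ⟨v, rfl⟩ := hz.surj w
    by_cases hv : v ∈ ({p, q, r} : Set P)
    · have h2 : u v = u p := (hz.fib v p).mpr (Or.inr ⟨hv, pmem⟩)
      rw [h2] at hlt1
      exact lt_irrefl _ hlt1
    · have h3 := (hz.up_lt_iff hv).mp hlt1
      have h4 : v < b := (hz.ult hv hb).mp hlt2
      exact hbet v hwB h3.2.1 h4
  have hmaxQ : IsMaxIn B (u b) := hpure.2 (u p) (hz.max_image_q hmax) (u b) hcovQ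
  refine ⟨hbB, ?_⟩
  intro x hx hbx
  by_contra hne
  have hbx' : b < x := lt_of_le_of_ne hbx (Ne.symm hne)
  have hxn : x ∉ ({p, q, r} : Set P) := hz.notmem_of_gt_q (lt_trans hqb hbx')
  have h1 : u b < u x := (hz.ult hb hxn).mpr hbx'
  exact absurd (hmaxQ.2 (u x) hx h1.le) (ne_of_gt h1)

/-- existence of a cover of q in the preimage of B -/
lemma exists_cover_from_q {A B : Set Q} (hAB : A ⊆ B) (hpure : PureCodimOneIn A B)
    (hmax : IsMaxIn (u ⁻¹' A) q) : ∃ z : P, CoversIn (u ⁻¹' B) q z := by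
  obtain ⟨c, hcmax, hccov⟩ := hpure.1 (u p) (hz.max_image_q hmax)
  obtain ⟨w, rfl⟩ := hz.surj c
  have hw : w ∉ ({p, q, r} : Set P) := by
    intro hw
    have h1 : u w = u p := (hz.fib w p).mpr (Or.inr ⟨hw, pmem⟩)
    rw [h1] at hccov
    exact lt_irrefl _ hccov.2.2.1
  have hqw : q < w := ((hz.up_lt_iff hw).mp hccov.2.2.1).2.1
  have hwB : w ∈ u ⁻¹' B := hccov.2.1
  have hqB : q ∈ u ⁻¹' B := by
    have h1 : u q = u p := (hz.fib q p).mpr (Or.inr ⟨qmem, pmem⟩)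
    simp only [Set.mem_preimage, h1]
    exact hccov.1
  obtain ⟨z, hzT, hzmin⟩ := exists_minimal_mem (Set.toFinite
    {x : P | x ∈ u ⁻¹' B ∧ q < x}) (⟨hwB, hqw⟩ : w ∈ {x : P | x ∈ u ⁻¹' B ∧ q < x})
  refine ⟨z, hqB, hzT.1, hzT.2, ?_⟩
  intro x hx hqx hxz
  exact hzmin x ⟨hx, hqx⟩ hxz

/-- the crux: a dual zipping of a nonsingular poset is a good map -/
lemma good (hP : NS3 P) : GoodMap u := by
  refine ⟨hz.mono, fun A B hAd hBd hAB hpure => ?_⟩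
  have hABbar : u ⁻¹' A ⊆ u ⁻¹' B := fun x hx => hAB hx
  -- purity of the preimage pair
  have purity : ∀ a : P, IsMaxIn (u ⁻¹' A) a → ∀ b : P, CoversIn (u ⁻¹' B) a b →
      IsMaxIn (u ⁻¹' B) b := by
    intro a hmax b hcov
    by_cases ha : a ∈ ({p, q, r} : Set P)
    · rcases ha with h | h | h
      · -- a = p : impossible, q is above p inside the preimage of A
        exfalso
        have hqA : q ∈ u ⁻¹' A := by
          have h1 : u q = u p := (hz.fib q p).mpr (Or.inr ⟨qmem, pmem⟩)
          simp only [Set.mem_preimage, h1]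
          rw [h] at hmax
          exact hmax.1
        rw [h] at hmax
        exact absurd (hmax.2 q hqA hz.pq.le) (ne_of_gt hz.pq)
      · rw [h] at hmax hcov
        exact hz.cover_from_q hAB hpure hmax hcov
      · rw [h] at hmax hcov
        have hmax' : IsMaxIn (u ⁻¹' A) r := hmax
        exact hz.swap.cover_from_q hAB
          ⟨hpure.1, hpure.2⟩ hmax' hcov
    · by_cases hb : b ∈ ({p, q, r} : Set P)
      · rcases hb with h | h | h
        · rw [h] at hcov
          exact absurd (hz.no_cover_p hP hBd hAB hpure ha hmax hcov) id
        · rw [h] at hcov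
          rw [h]
          exact hz.cover_q_max hAB hpure ha hmax hcov
        · rw [h] at hcov
          rw [h]
          exact hz.swap.cover_q_max hAB ⟨hpure.1, hpure.2⟩
            ((mem_triple_swap (a := p) (b := q) (c := r)).not.mpr ha) hmax hcov
      · exact hz.cover_off_max hAB hpure ha hb hmax hcov
  constructor
  · -- codimension one
    intro a hmax
    by_cases ha : a ∈ ({p, q, r} : Set P)
    · rcases ha with h | h | h
      · exfalso
        have hqA : q ∈ u ⁻¹' A := by
          have h1 : u q = u p := (hz.fib q p).mpr (Or.inr ⟨qmem, pmem⟩)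
          simp only [Set.mem_preimage, h1]
          rw [h] at hmax
          exact hmax.1
        rw [h] at hmax
        exact absurd (hmax.2 q hqA hz.pq.le) (ne_of_gt hz.pq)
      · rw [h] at hmax ⊢
        obtain ⟨z, hzcov⟩ := hz.exists_cover_from_q hAB hpure hmax
        exact ⟨z, purity q hmax z hzcov, hzcov⟩
      · rw [h] at hmax ⊢
        obtain ⟨z, hzcov⟩ := hz.swap.exists_cover_from_q hAB ⟨hpure.1, hpure.2⟩ hmax
        exact ⟨z, purity r hmax z hzcov, hzcov⟩
    · -- off fiber : find some element of the preimage of B above a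
      obtain ⟨c, hcmax, hccov⟩ := hpure.1 (u a) (hz.max_image ha hmax)
      obtain ⟨w, rfl⟩ := hz.surj c
      have hex : ∃ x : P, x ∈ u ⁻¹' B ∧ a < x := by
        by_cases hw : w ∈ ({p, q, r} : Set P)
        · have h1 : u w = u p := (hz.fib w p).mpr (Or.inr ⟨hw, pmem⟩)
          rw [h1] at hccov
          have hqB : q ∈ u ⁻¹' B := by
            have h2 : u q = u p := (hz.fib q p).mpr (Or.inr ⟨qmem, pmem⟩)
            simp only [Set.mem_preimage, h2]
            exact hccov.2.1
          have hrB : r ∈ u ⁻¹' B := by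
            have h2 : u r = u p := (hz.fib r p).mpr (Or.inr ⟨rmem, pmem⟩)
            simp only [Set.mem_preimage, h2]
            exact hccov.2.1
          rcases (hz.lt_up_iff ha).mp hccov.2.2.1 with h2 | h2
          · exact ⟨q, hqB, h2⟩
          · exact ⟨r, hrB, h2⟩
        · exact ⟨w, hccov.2.1, (hz.ult ha hw).mp hccov.2.2.1⟩
      obtain ⟨x₀, hx₀B, hax₀⟩ := hex
      obtain ⟨z, hzT, hzmin⟩ := exists_minimal_mem (Set.toFinite
        {x : P | x ∈ u ⁻¹' B ∧ a < x}) (⟨hx₀B, hax₀⟩ : x₀ ∈ {x : P | x ∈ u ⁻¹' B ∧ a < x})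
      have hzcov : CoversIn (u ⁻¹' B) a z := by
        refine ⟨hABbar hmax.1, hzT.1, hzT.2, ?_⟩
        intro x hx hax hxz
        exact hzmin x ⟨hx, hax⟩ hxz
      exact ⟨z, purity a hmax z hzcov, hzcov⟩
  · exact purity

end Crux
end DZ

------------------------------------------------------------------
-- Bridge and assembly
------------------------------------------------------------------

lemma dual_mem_triple {α : Type u} {x p q r : α} :
    (OrderDual.toDual x) ∈
      ({OrderDual.toDual p, OrderDual.toDual q, OrderDual.toDual r} : Set αᵒᵈ) ↔
      x ∈ ({p, q, r} : Set α) := by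
  simp only [Set.mem_insert_iff, Set.mem_singleton_iff]
  exact Iff.rfl

lemma IsElementaryZipping.toDZ {α β : Type u} [PartialOrder α] [PartialOrder β]
    {f : α → β} {p q r : α} (h : IsElementaryZipping f p q r) :
    DZ (dualMap f) (OrderDual.toDual p) (OrderDual.toDual q) (OrderDual.toDual r) := by
  obtain ⟨h1, h2, h3, h4, h5, h6, h7, h8, h9, h10, h11, h12⟩ := h
  refine ⟨?_, ?_, ?_, ?_, ?_, ?_, ?_, ?_, ?_, ?_, ?_, ?_, ?_, ?_⟩
  · exact h2
  · exact h1
  · exact h3.lt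
  · exact fun x hx1 hx2 => h3.2 hx2 hx1
  · exact h4.lt
  · exact fun x hx1 hx2 => h4.2 hx2 hx1
  · exact fun s hs hsq hsr => h5 (OrderDual.ofDual s) hs
      (fun hc => hsq (congrArg OrderDual.toDual hc))
      (fun hc => hsr (congrArg OrderDual.toDual hc))
  · exact fun s hs1 hs2 => h6 (OrderDual.ofDual s) hs1 hs2
  · exact fun x y hxy => h7 hxy
  · intro b
    obtain ⟨a, ha⟩ := h8 (OrderDual.ofDual b)
    exact ⟨OrderDual.toDual a, congrArg OrderDual.toDual ha⟩
  · intro x y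
    rw [show (x ∈ ({OrderDual.toDual p, OrderDual.toDual q, OrderDual.toDual r} :
        Set αᵒᵈ)) = (OrderDual.ofDual x ∈ ({p, q, r} : Set α)) from
      propext dual_mem_triple]
    rw [show (y ∈ ({OrderDual.toDual p, OrderDual.toDual q, OrderDual.toDual r} :
        Set αᵒᵈ)) = (OrderDual.ofDual y ∈ ({p, q, r} : Set α)) from
      propext dual_mem_triple]
    constructor
    · intro hfe
      rcases (h9 (OrderDual.ofDual x) (OrderDual.ofDual y)).mp hfe with hc | hc
      · exact Or.inl (congrArg OrderDual.toDual hc)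
      · exact Or.inr hc
    · intro hc
      rcases hc with hc | hc
      · exact congrArg (dualMap f) hc
      · exact (h9 (OrderDual.ofDual x) (OrderDual.ofDual y)).mpr (Or.inr hc)
  · intro x y hx hy
    exact h10 (OrderDual.ofDual y) (OrderDual.ofDual x)
      (fun hc => hy (dual_mem_triple.mpr hc)) (fun hc => hx (dual_mem_triple.mpr hc))
  · intro x hx
    exact h11 (OrderDual.ofDual x) (fun hc => hx (dual_mem_triple.mpr hc))
  · intro x hx
    exact h12 (OrderDual.ofDual x) (fun hc => hx (dual_mem_triple.mpr hc))

lemma zipseq_main {α β : Type u} [PartialOrder α] [PartialOrder β] {f : α → β}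
    (hzip : ZipSeq α β f) (hfin : Finite α) (hns : NS3 αᵒᵈ) :
    Function.Surjective f ∧ GoodMap (dualMap f) ∧
      (∀ b : βᵒᵈ, PPC ((dualMap f) ⁻¹' {x | x ≤ b})) ∧ NS3 βᵒᵈ := by
  induction hzip with
  | refl =>
      refine ⟨Function.surjective_id, ⟨monotone_id, fun A B _ _ _ hC => hC⟩, ?_, hns⟩
      intro b
      exact ppc_cone b
  | step p q r hg hh ih =>
      rename_i α' β' γ' _ _ _ g h
      obtain ⟨hsurj, hgood, hppc, hns3⟩ := ih hns
      haveI hfinβ : Finite β' := Finite.of_surjective g hsurj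
      haveI hfinγ : Finite γ' := Finite.of_surjective h hh.2.2.2.2.2.2.2.1
      haveI : Finite β'ᵒᵈ := hfinβ
      haveI : Finite γ'ᵒᵈ := hfinγ
      have hz : DZ (dualMap h) (OrderDual.toDual p) (OrderDual.toDual q)
          (OrderDual.toDual r) := hh.toDZ
      have hcomp : dualMap (h ∘ g) = dualMap h ∘ dualMap g := rfl
      have hgood' : GoodMap (dualMap (h ∘ g)) := by
        rw [hcomp]
        exact hgood.comp (hz.good hns3)
      refine ⟨Function.Surjective.comp (hh.2.2.2.2.2.2.2.1) hsurj, hgood', ?_, hz.ns3 hns3⟩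
      intro c
      obtain ⟨c', rfl, hc'⟩ := hz.rep c
      rcases hc' with hc' | hc'
      · have hpre : (dualMap (h ∘ g)) ⁻¹' {x | x ≤ dualMap h c'} =
            (dualMap g) ⁻¹' {x | x ≤ c'} := by
          rw [hcomp, Set.preimage_comp, hz.preimage_cone hc']
        rw [hpre]
        exact hppc c'
      · rw [← hc']
        have hpre : (dualMap (h ∘ g)) ⁻¹' {x | x ≤ dualMap h (OrderDual.toDual p)} =
            ((dualMap g) ⁻¹' {x | x ≤ OrderDual.toDual q}) ∪
            ((dualMap g) ⁻¹' {x | x ≤ OrderDual.toDual r}) := by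
          rw [hcomp, Set.preimage_comp, hz.preimage_cone_p, Set.preimage_union]
        rw [hpre]
        have hQd : DownClosed ((dualMap g) ⁻¹' {x | x ≤ OrderDual.toDual q}) :=
          (downClosed_le _).preimage hgood.1
        have hRd : DownClosed ((dualMap g) ⁻¹' {x | x ≤ OrderDual.toDual r}) :=
          (downClosed_le _).preimage hgood.1
        have hinter : ((dualMap g) ⁻¹' {x | x ≤ OrderDual.toDual q}) ∩
            ((dualMap g) ⁻¹' {x | x ≤ OrderDual.toDual r}) =
            (dualMap g) ⁻¹' {x | x ≤ OrderDual.toDual p} := by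
          rw [← Set.preimage_inter, hz.cone_inter]
        have hcQ : PureCodimOneIn
            (((dualMap g) ⁻¹' {x | x ≤ OrderDual.toDual q}) ∩
              ((dualMap g) ⁻¹' {x | x ≤ OrderDual.toDual r}))
            ((dualMap g) ⁻¹' {x | x ≤ OrderDual.toDual q}) := by
          rw [hinter]
          exact hgood.2 {x | x ≤ OrderDual.toDual p} {x | x ≤ OrderDual.toDual q}
            (downClosed_le _) (downClosed_le _)
            (fun x hx => show x ≤ OrderDual.toDual q from
              le_trans (show x ≤ OrderDual.toDual p from hx) hz.pq.le)
            (pureCodimOne_cone_cone hz.pq hz.pq_cov)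
        have hcR : PureCodimOneIn
            (((dualMap g) ⁻¹' {x | x ≤ OrderDual.toDual q}) ∩
              ((dualMap g) ⁻¹' {x | x ≤ OrderDual.toDual r}))
            ((dualMap g) ⁻¹' {x | x ≤ OrderDual.toDual r}) := by
          rw [hinter]
          exact hgood.2 {x | x ≤ OrderDual.toDual p} {x | x ≤ OrderDual.toDual r}
            (downClosed_le _) (downClosed_le _)
            (fun x hx => show x ≤ OrderDual.toDual r from
              le_trans (show x ≤ OrderDual.toDual p from hx) hz.pr.le)
            (pureCodimOne_cone_cone hz.pr hz.pr_cov)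
        refine PPC.step (isClosedSubposet_union_left hQd) (isClosedSubposet_union_right hRd)
          hcQ hcR (hppc _) (hppc _) ?_
        rw [hinter]
        exact hppc _

lemma ns3_undual {P : Type*} [PartialOrder P] (h : NS3 Pᵒᵈ) : NS3 P := by
  intro a m b ham hmb
  obtain ⟨x, h1, h2, h3⟩ := h (OrderDual.toDual b) (OrderDual.toDual m)
    (OrderDual.toDual a) hmb ham
  exact ⟨OrderDual.ofDual x, h2, h1, fun hc => h3 (congrArg OrderDual.toDual hc)⟩


/-- (a) An elementary zipping of a nonsingular finite poset has nonsingular target.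
(b) If a nonsingular finite poset `α` zips onto `β` with composite quotient map `f`,
then the dual map `f^op : αᵒᵈ → βᵒᵈ` is a constructible map. -/
theorem zipping_nonsingular_and_dual_constructible :
    (∀ (α β : Type u) [PartialOrder α] [PartialOrder β] [Finite α] [Finite β]
        (f : α → β) (p q r : α),
        NonsingularPoset α → IsElementaryZipping f p q r → NonsingularPoset β) ∧
    (∀ (α β : Type u) [PartialOrder α] [PartialOrder β] [Finite α] [Finite β]
        (f : α → β),
        NonsingularPoset α → ZipSeq α β f → IsConstructibleMap (dualMap f)) := by
  constructor
  · intro α β _ _ _ _ f p q r hns hzip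
    have hz := hzip.toDZ
    have h2 : NS3 αᵒᵈ := ns3_dual (nonsingular_iff_ns3.mp hns)
    have h3 : NS3 βᵒᵈ := hz.ns3 h2
    exact nonsingular_iff_ns3.mpr (ns3_undual h3)
  · intro α β _ _ hfin _ f hns hzip
    have h2 : NS3 αᵒᵈ := ns3_dual (nonsingular_iff_ns3.mp hns)
    obtain ⟨_, hgood, hppc, _⟩ := zipseq_main hzip hfin h2
    refine ⟨?_, fun c => (hppc c).toPC⟩
    intro c
    exact (hgood.2 {y | y < c} {y | y ≤ c} (downClosed_lt c) (downClosed_le c)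
      (fun x hx => show x ≤ c from le_of_lt hx) (pureCodimOne_strict_cone c)).1
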